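/- arXiv:1101.5133 — 2 statements merged into one kernel-verified Lean document; each statement's English description precedes it below -/
import Mathlib

section
/- Let φ₀, φ₁ : ℝⁿ → ℝ be smooth ℤⁿ-periodic functions such that u = ½|x|² + φ₀ and v = ½|x|² + φ₁ are convex with positive definite Hessians and both satisfy Abreu's equation Σ_{i,j} ∂²u^{ij}/∂x_i∂x_j = A = Σ_{i,j} ∂²v^{ij}/∂x_i∂x_j with the same right-hand side A. Then φ₀ − φ₁ is constant. -/
open MeasureTheory Matrix

/-- Partial derivative in the `i`-th coordinate direction. -/
noncomputable def pd {n : ℕ} (i : Fin n) (f : (Fin n → ℝ) → ℝ) (x : Fin n → ℝ) : ℝ :=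
  fderiv ℝ f x (Pi.single i 1)

/-- Hessian matrix `(u_{ij})` of `u` at `x`. -/
noncomputable def hess {n : ℕ} (u : (Fin n → ℝ) → ℝ) (x : Fin n → ℝ) :
    Matrix (Fin n) (Fin n) ℝ :=
  Matrix.of fun i j => pd i (pd j u) x

/-- `f : ℝⁿ → ℝ` is ℤⁿ-periodic. -/
def ZPer {n : ℕ} (f : (Fin n → ℝ) → ℝ) : Prop :=
  ∀ (x : Fin n → ℝ) (k : Fin n → ℤ), f (x + fun i => (k i : ℝ)) = f x

/-- Abreu's operator `∑_{i,j} ∂²u^{ij}/∂x_i∂x_j`, where `(u^{ij})` is the inverse Hessian. -/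
noncomputable def abreuOp {n : ℕ} (u : (Fin n → ℝ) → ℝ) (x : Fin n → ℝ) : ℝ :=
  ∑ i, ∑ j, pd i (pd j (fun z => (hess u z)⁻¹ i j)) x


variable {n : ℕ}

lemma contDiff_pd {f : (Fin n → ℝ) → ℝ} (hf : ContDiff ℝ (⊤ : ℕ∞) f) (i : Fin n) :
    ContDiff ℝ (⊤ : ℕ∞) (pd i f) := by
  have h1 : ContDiff ℝ (⊤ : ℕ∞) (fderiv ℝ f) := hf.fderiv_right (by exact_mod_cast le_top)
  exact h1.clm_apply contDiff_const

lemma pd_add {f g : (Fin n → ℝ) → ℝ} (i : Fin n) (x : Fin n → ℝ)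
    (hf : DifferentiableAt ℝ f x) (hg : DifferentiableAt ℝ g x) :
    pd i (fun y => f y + g y) x = pd i f x + pd i g x := by
  simp [pd, fderiv_fun_add hf hg]

lemma pd_sub {f g : (Fin n → ℝ) → ℝ} (i : Fin n) (x : Fin n → ℝ)
    (hf : DifferentiableAt ℝ f x) (hg : DifferentiableAt ℝ g x) :
    pd i (fun y => f y - g y) x = pd i f x - pd i g x := by
  simp [pd, fderiv_fun_sub hf hg]

lemma pd_mul {f g : (Fin n → ℝ) → ℝ} (i : Fin n) (x : Fin n → ℝ)
    (hf : DifferentiableAt ℝ f x) (hg : DifferentiableAt ℝ g x) :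
    pd i (fun y => f y * g y) x = pd i f x * g x + f x * pd i g x := by
  simp [pd, fderiv_fun_mul hf hg]; ring

lemma pd_const (i : Fin n) (x : Fin n → ℝ) (c : ℝ) : pd i (fun _ => c) x = 0 := by
  simp [pd]

lemma fderiv_periodic {f : (Fin n → ℝ) → ℝ} (hf : ZPer f) (hd : Differentiable ℝ f)
    (x : Fin n → ℝ) (k : Fin n → ℤ) :
    fderiv ℝ f (x + fun i => (k i : ℝ)) = fderiv ℝ f x := by
  set c : Fin n → ℝ := fun i => (k i : ℝ) with hc
  have h1 : HasFDerivAt (fun y : Fin n → ℝ => y + c) (ContinuousLinearMap.id ℝ _) x :=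
    (hasFDerivAt_id x).add_const c
  have h2 : HasFDerivAt (fun y => f (y + c)) ((fderiv ℝ f (x + c)).comp
      (ContinuousLinearMap.id ℝ _)) x := (hd (x + c)).hasFDerivAt.comp x h1
  have h3 : (fun y => f (y + c)) = f := by funext y; exact hf y k
  rw [h3] at h2
  have h4 := h2.fderiv
  rw [ContinuousLinearMap.comp_id] at h4
  exact h4.symm

lemma ZPer.pd {f : (Fin n → ℝ) → ℝ} (hf : ZPer f) (hd : Differentiable ℝ f) (i : Fin n) :
    ZPer (pd i f) := by
  intro x k
  unfold _root_.pd
  rw [fderiv_periodic hf hd]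

lemma pd_sum {s : Finset (Fin n)} {F : Fin n → (Fin n → ℝ) → ℝ} (i : Fin n) (x : Fin n → ℝ)
    (hF : ∀ j, DifferentiableAt ℝ (F j) x) :
    pd i (fun y => ∑ j ∈ s, F j y) x = ∑ j ∈ s, pd i (F j) x := by
  simp only [pd]
  rw [fderiv_fun_sum (fun j _ => hF j)]
  simp

/-- The standard quadratic. -/
noncomputable def quadF (n : ℕ) : (Fin n → ℝ) → ℝ := fun x => (1 / 2 : ℝ) * ∑ i, x i ^ 2

lemma contDiff_quadF : ContDiff ℝ (⊤ : ℕ∞) (quadF n) := by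
  apply ContDiff.mul contDiff_const
  apply ContDiff.sum
  intro i _
  exact ((ContinuousLinearMap.proj i : (Fin n → ℝ) →L[ℝ] ℝ).contDiff).pow 2

lemma hasFDerivAt_quadF (x : Fin n → ℝ) :
    HasFDerivAt (quadF n) (∑ j, x j • (ContinuousLinearMap.proj j : (Fin n → ℝ) →L[ℝ] ℝ)) x := by
  have hp : ∀ j : Fin n, HasFDerivAt (fun y : Fin n → ℝ => y j)
      (ContinuousLinearMap.proj j : (Fin n → ℝ) →L[ℝ] ℝ) x := fun j => hasFDerivAt_apply j x
  have h1 : ∀ j : Fin n, HasFDerivAt (fun y : Fin n → ℝ => y j ^ 2)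
      ((2 * x j) • (ContinuousLinearMap.proj j : (Fin n → ℝ) →L[ℝ] ℝ)) x := by
    intro j
    have := (hp j).mul (hp j)
    simp only [pow_two]
    refine this.congr_fderiv ?_
    ext v
    simp [two_mul]; ring
  have h2 := HasFDerivAt.fun_sum (fun j (_ : j ∈ Finset.univ) => h1 j)
  have h3 := h2.const_mul (1 / 2 : ℝ)
  refine h3.congr_fderiv ?_
  ext v
  simp only [ContinuousLinearMap.coe_sum', Finset.sum_apply, ContinuousLinearMap.coe_smul',
    Pi.smul_apply, ContinuousLinearMap.proj_apply, smul_eq_mul, ContinuousLinearMap.coe_smul]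
  rw [Finset.mul_sum]
  congr 1; funext j; ring

lemma pd_quadF (j : Fin n) (x : Fin n → ℝ) : pd j (quadF n) x = x j := by
  rw [pd, (hasFDerivAt_quadF x).fderiv]
  simp [Pi.single_apply]

lemma pd_pd_quadF (i j : Fin n) (x : Fin n → ℝ) :
    pd i (pd j (quadF n)) x = if i = j then 1 else 0 := by
  have h : pd j (quadF n) = fun y => y j := by funext y; exact pd_quadF j y
  rw [h]
  have : HasFDerivAt (fun y : Fin n → ℝ => y j)
      (ContinuousLinearMap.proj j : (Fin n → ℝ) →L[ℝ] ℝ) x := hasFDerivAt_apply j x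
  rw [pd, this.fderiv]
  simp [Pi.single_apply, eq_comm]


lemma pd_pd_symm {f : (Fin n → ℝ) → ℝ} (hf : ContDiff ℝ (⊤ : ℕ∞) f) (i j : Fin n)
    (x : Fin n → ℝ) : pd i (pd j f) x = pd j (pd i f) x := by
  have hd : Differentiable ℝ f := hf.differentiable (by simp)
  have hf' : ContDiff ℝ (⊤ : ℕ∞) (fderiv ℝ f) := hf.fderiv_right (by exact_mod_cast le_top)
  have hx : HasFDerivAt (fderiv ℝ f) (fderiv ℝ (fderiv ℝ f) x) x :=
    ((hf'.differentiable (by simp)) x).hasFDerivAt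
  have hsymm := second_derivative_symmetric (fun y => (hd y).hasFDerivAt) hx
  have key : ∀ a b : Fin n, pd a (pd b f) x =
      fderiv ℝ (fderiv ℝ f) x (Pi.single a 1) (Pi.single b 1) := by
    intro a b
    have h2 : HasFDerivAt (fun y => fderiv ℝ f y (Pi.single b 1))
        ((fderiv ℝ (fderiv ℝ f) x).flip (Pi.single b 1)) x := by
      have := hx.clm_apply (hasFDerivAt_const (Pi.single b (1:ℝ)) x)
      simpa using this
    show fderiv ℝ (fun y => fderiv ℝ f y (Pi.single b 1)) x (Pi.single a 1) = _
    rw [h2.fderiv]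
    simp
  rw [key i j, key j i, hsymm]

section MatrixSmooth

variable {M : (Fin n → ℝ) → Matrix (Fin n) (Fin n) ℝ}

lemma contDiff_det (hM : ∀ i j, ContDiff ℝ (⊤ : ℕ∞) (fun x => M x i j)) :
    ContDiff ℝ (⊤ : ℕ∞) (fun x => (M x).det) := by
  simp only [Matrix.det_apply']
  apply ContDiff.sum
  intro σ _
  have : ContDiff ℝ (⊤ : ℕ∞) (fun x => ∏ i, M x (σ i) i) :=
    contDiff_prod (fun i _ => hM (σ i) i)
  exact contDiff_const.mul this

lemma contDiff_adjugate (hM : ∀ i j, ContDiff ℝ (⊤ : ℕ∞) (fun x => M x i j)) (i j : Fin n) :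
    ContDiff ℝ (⊤ : ℕ∞) (fun x => (M x).adjugate i j) := by
  simp only [Matrix.adjugate_apply]
  apply contDiff_det
  intro a b
  simp only [Matrix.updateRow_apply]
  by_cases h : a = j
  · simp only [h, if_true]
    exact contDiff_const
  · simp only [h, if_false]
    exact hM a b

lemma contDiff_inv_entry (hM : ∀ i j, ContDiff ℝ (⊤ : ℕ∞) (fun x => M x i j))
    (hdet : ∀ x, (M x).det ≠ 0) (i j : Fin n) :
    ContDiff ℝ (⊤ : ℕ∞) (fun x => (M x)⁻¹ i j) := by
  have : (fun x => (M x)⁻¹ i j) = fun x => ((M x).det)⁻¹ * (M x).adjugate i j := by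
    funext x
    rw [Matrix.inv_def, Ring.inverse_eq_inv]
    simp [Matrix.smul_apply]
  rw [this]
  exact ((contDiff_det hM).inv hdet).mul (contDiff_adjugate hM i j)

end MatrixSmooth

section TraceLemma

variable {m : Type*} [Fintype m] [DecidableEq m]

lemma trace_mul_quad_nonneg {Q : Matrix m m ℝ} (hQ : Q.PosSemidef) (M : Matrix m m ℝ) :
    0 ≤ (M * Q * Mᵀ).trace := by
  rw [Matrix.trace]
  apply Finset.sum_nonneg
  intro i _
  have h := hQ.dotProduct_mulVec_nonneg (fun k => M i k)
  simp only [star_trivial] at h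
  convert h using 1
  simp [Matrix.diag, Matrix.mul_apply, dotProduct, Matrix.mulVec, Finset.mul_sum,
    Finset.sum_mul, mul_comm, mul_assoc]
  rw [Finset.sum_comm]
  congr 1; funext l; congr 1; funext k; ring

lemma trace_mul_quad_eq_zero {Q : Matrix m m ℝ} (hQ : Q.PosDef) (M : Matrix m m ℝ)
    (h : (M * Q * Mᵀ).trace = 0) : M = 0 := by
  have hdiag : ∀ i, (M * Q * Mᵀ) i i = (fun k => M i k) ⬝ᵥ Q *ᵥ (fun k => M i k) := by
    intro i
    simp [Matrix.mul_apply, dotProduct, Matrix.mulVec, Finset.mul_sum,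
      Finset.sum_mul, mul_comm, mul_assoc]
    rw [Finset.sum_comm]
    congr 1; funext l; congr 1; funext k; ring
  have hnn : ∀ i, 0 ≤ (M * Q * Mᵀ) i i := by
    intro i
    rw [hdiag i]
    have := hQ.posSemidef.dotProduct_mulVec_nonneg (fun k => M i k)
    simpa using this
  have hz : ∀ i, (M * Q * Mᵀ) i i = 0 := by
    intro i
    have := (Finset.sum_eq_zero_iff_of_nonneg (fun i _ => hnn i)).1 h i (Finset.mem_univ i)
    exact this
  ext i j
  simp only [Matrix.zero_apply]
  by_contra hij
  have hrow : (fun k => M i k) ≠ 0 := by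
    intro h0
    exact hij (by simpa using congrFun h0 j)
  have hpos := hQ.dotProduct_mulVec_pos (x := fun k => M i k) (by simpa [star_trivial] using hrow)
  rw [star_trivial] at hpos
  have hzi := hz i
  rw [hdiag i] at hzi
  exact absurd hzi (ne_of_gt hpos)

open scoped MatrixOrder in
/-- Key pointwise lemma: for `P, Q` positive definite and `W` symmetric,
`trace (P * W * Q * W) ≥ 0` with equality iff `W = 0`. -/
lemma trace_PWQW_nonneg {P Q W : Matrix m m ℝ} (hP : P.PosDef) (hQ : Q.PosDef)
    (hW : Wᵀ = W) : 0 ≤ (P * W * Q * W).trace ∧ ((P * W * Q * W).trace = 0 → W = 0) := by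
  obtain ⟨S, hSsym, hSS, hSdet⟩ : ∃ S : Matrix m m ℝ, Sᵀ = S ∧ S * S = P ∧ S.det ≠ 0 := by
    refine ⟨CFC.sqrt P, ?_, CFC.sqrt_mul_sqrt_self P (nonneg_iff_posSemidef.2 hP.posSemidef), ?_⟩
    · have h := (nonneg_iff_posSemidef.1 (CFC.sqrt_nonneg P)).1
      ext i j
      have h2 := congrFun (congrFun h i) j
      simpa [Matrix.conjTranspose_apply] using h2
    · intro h0
      have : P.det = 0 := by
        rw [← CFC.sqrt_mul_sqrt_self P (nonneg_iff_posSemidef.2 hP.posSemidef), Matrix.det_mul, h0, mul_zero]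
      exact (ne_of_gt hP.det_pos) this
  set M := S * W with hM
  have hMT : Mᵀ = W * S := by rw [hM, Matrix.transpose_mul, hW, hSsym]
  have htr : (P * W * Q * W).trace = (M * Q * Mᵀ).trace := by
    rw [hMT, hM, ← hSS]
    simp only [Matrix.mul_assoc]
    rw [Matrix.trace_mul_comm S]
    simp only [Matrix.mul_assoc]
  constructor
  · rw [htr]; exact trace_mul_quad_nonneg hQ.posSemidef M
  · intro h0
    rw [htr] at h0
    have hM0 : M = 0 := trace_mul_quad_eq_zero hQ M h0
    have : S⁻¹ * (S * W) = 0 := by rw [← hM, hM0, mul_zero]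
    rwa [← Matrix.mul_assoc, Matrix.nonsing_inv_mul S (isUnit_iff_ne_zero.2 hSdet), Matrix.one_mul] at this

end TraceLemma

section Divergence

lemma insertNth_add_single {m : ℕ} (i : Fin (m + 1)) (x : Fin m → ℝ) :
    (i.insertNth 0 x + fun j => ((Pi.single i 1 : Fin (m+1) → ℤ) j : ℝ)) =
      i.insertNth 1 x := by
  funext j
  refine Fin.succAboveCases i ?_ ?_ j
  · simp [Pi.single_apply]
  · intro k
    simp [Pi.single_apply, Fin.succAbove_ne i k, (Fin.succAbove_ne i k).symm]

/-- The integral of a divergence of a smooth periodic family over the unit cube vanishes. -/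
lemma integral_div_periodic {m : ℕ} (F : Fin (m+1) → (Fin (m+1) → ℝ) → ℝ)
    (hF : ∀ i, ContDiff ℝ (⊤ : ℕ∞) (F i)) (hper : ∀ i, ZPer (F i)) :
    ∫ x in Set.Icc (0 : Fin (m+1) → ℝ) 1, ∑ i, pd i (F i) x = 0 := by
  have hd : ∀ i, Differentiable ℝ (F i) := fun i => (hF i).differentiable (by simp)
  have key := MeasureTheory.integral_divergence_of_hasFDerivAt_off_countable'
    (0 : Fin (m+1) → ℝ) 1 (by intro i; norm_num) F (fun i x => fderiv ℝ (F i) x) ∅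
    Set.countable_empty
    (fun i => ((hF i).continuous).continuousOn)
    (fun x _ i => (hd i x).hasFDerivAt)
    (by
      apply ContinuousOn.integrableOn_compact isCompact_Icc
      apply Continuous.continuousOn
      apply continuous_finset_sum
      intro i _
      exact (contDiff_pd (hF i) i).continuous)
  rw [show (∫ x in Set.Icc (0 : Fin (m+1) → ℝ) 1, ∑ i, pd i (F i) x) =
      ∫ x in Set.Icc (0 : Fin (m+1) → ℝ) 1, ∑ i, fderiv ℝ (F i) x (Pi.single i 1) from rfl]
  rw [key]
  apply Finset.sum_eq_zero
  intro i _
  have : ∀ x : Fin m → ℝ, F i (i.insertNth ((1 : Fin (m+1) → ℝ) i) x) =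
      F i (i.insertNth ((0 : Fin (m+1) → ℝ) i) x) := by
    intro x
    have h1 := hper i (i.insertNth 0 x) (Pi.single i 1)
    rw [insertNth_add_single] at h1
    simpa using h1
  simp only [this, sub_self]

/-- Integral of a single partial derivative of a smooth periodic function over the unit cube. -/
lemma integral_pd_periodic {m : ℕ} (g : (Fin (m+1) → ℝ) → ℝ)
    (hg : ContDiff ℝ (⊤ : ℕ∞) g) (hper : ZPer g) (i : Fin (m+1)) :
    ∫ x in Set.Icc (0 : Fin (m+1) → ℝ) 1, pd i g x = 0 := by
  classical
  have key := integral_div_periodic (fun j => if j = i then g else fun _ => 0)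
    (fun j => by by_cases h : j = i <;> simp [h, hg, contDiff_const])
    (fun j => by by_cases h : j = i <;> simp [h, hper] <;> intro x k <;> rfl)
  have : ∀ x, (∑ j, pd j (if j = i then g else fun _ => (0:ℝ)) x) = pd i g x := by
    intro x
    rw [Finset.sum_eq_single i]
    · simp
    · intro j _ hj
      simp [hj, pd_const]
    · intro h; exact absurd (Finset.mem_univ i) h
  simpa only [this] using key

end Divergence

section ZeroIntegral

lemma eq_zero_of_integral_zero {m : ℕ} (f : (Fin m → ℝ) → ℝ) (hf : Continuous f)
    (hnn : ∀ x, 0 ≤ f x) (hint : ∫ x in Set.Icc (0 : Fin m → ℝ) 1, f x = 0)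
    (x : Fin m → ℝ) (hx : x ∈ Set.Icc (0 : Fin m → ℝ) 1) : f x = 0 := by
  by_contra hfx
  have hfxpos : 0 < f x := lt_of_le_of_ne (hnn x) (Ne.symm hfx)
  -- `x` is in the closure of the interior of the cube
  have hQ : Set.Icc (0 : Fin m → ℝ) 1 ⊆ closure (Set.pi Set.univ fun _ : Fin m =>
      Set.Ioo (0:ℝ) 1) := by
    rw [closure_pi_set]
    simp only [closure_Ioo (zero_ne_one (α := ℝ))]
    rw [Set.pi_univ_Icc]
    intro y hy
    exact hy
  -- the set where f > 0 is open and contains x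
  have hopen : IsOpen {y : Fin m → ℝ | 0 < f y} := isOpen_lt continuous_const hf
  have hU : ∃ y, y ∈ {y : Fin m → ℝ | 0 < f y} ∩ (Set.pi Set.univ fun _ : Fin m =>
      Set.Ioo (0:ℝ) 1) ∧ IsOpen ({y : Fin m → ℝ | 0 < f y} ∩ (Set.pi Set.univ fun _ : Fin m =>
      Set.Ioo (0:ℝ) 1)) := by
    have hxcl := hQ hx
    have := mem_closure_iff.1 hxcl _ hopen hfxpos
    obtain ⟨y, hy1, hy2⟩ := this
    exact ⟨y, ⟨hy1, hy2⟩, hopen.inter (isOpen_set_pi Set.finite_univ (fun _ _ => isOpen_Ioo))⟩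
  obtain ⟨y, hy, hUopen⟩ := hU
  set U := {y : Fin m → ℝ | 0 < f y} ∩ (Set.pi Set.univ fun _ : Fin m => Set.Ioo (0:ℝ) 1)
  have hUpos : 0 < volume U := hUopen.measure_pos volume ⟨y, hy⟩
  -- but f = 0 a.e. on the cube
  have hae : f =ᵐ[volume.restrict (Set.Icc (0 : Fin m → ℝ) 1)] 0 := by
    rw [← MeasureTheory.integral_eq_zero_iff_of_nonneg_ae]
    · exact hint
    · exact Filter.Eventually.of_forall (fun y => hnn y)
    · exact (hf.continuousOn).integrableOn_compact isCompact_Icc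
  have hUsub : U ⊆ Set.Icc (0 : Fin m → ℝ) 1 := by
    intro z hz
    have := hz.2
    rw [← Set.pi_univ_Icc]
    intro i _
    exact Set.Ioo_subset_Icc_self (this i (Set.mem_univ i))
  have hzero : volume.restrict (Set.Icc (0 : Fin m → ℝ) 1) {y | f y ≠ 0} = 0 := hae
  have : volume.restrict (Set.Icc (0 : Fin m → ℝ) 1) U = 0 := by
    apply measure_mono_null _ hzero
    intro z hz
    exact ne_of_gt hz.1
  rw [MeasureTheory.Measure.restrict_apply' measurableSet_Icc] at this
  rw [Set.inter_eq_self_of_subset_left hUsub] at this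
  exact absurd this (ne_of_gt hUpos)

end ZeroIntegral

section Constant

lemma clm_eq_of_basis {m : ℕ} (L L' : (Fin m → ℝ) →L[ℝ] ℝ)
    (h : ∀ i, L (Pi.single i 1) = L' (Pi.single i 1)) : L = L' := by
  ext v
  have hv : v = ∑ i, v i • (Pi.single i (1:ℝ) : Fin m → ℝ) := by
    funext j
    simp [Pi.single_apply]
  rw [hv]
  simp only [map_sum, _root_.map_smul, h]

lemma const_of_pd_pd_zero {m : ℕ} (h : (Fin m → ℝ) → ℝ) (hh : ContDiff ℝ (⊤ : ℕ∞) h)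
    (hper : ZPer h) (hzero : ∀ x i j, pd i (pd j h) x = 0) : ∀ x, h x = h 0 := by
  have hd : Differentiable ℝ h := hh.differentiable (by simp)
  -- each pd j h is constant
  have hpdconst : ∀ j x, pd j h x = pd j h 0 := by
    intro j x
    apply is_const_of_fderiv_eq_zero (𝕜 := ℝ)
    · exact (contDiff_pd hh j).differentiable (by simp)
    · intro y
      apply clm_eq_of_basis
      intro i
      have := hzero y i j
      rw [pd] at this
      simpa using this
  -- so fderiv h is constant
  have hfconst : ∀ x, fderiv ℝ h x = fderiv ℝ h 0 := by
    intro x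
    apply clm_eq_of_basis
    intro i
    exact hpdconst i x
  -- h x = h 0 + (fderiv h 0) x
  have haffine : ∀ x, h x = h 0 + fderiv ℝ h 0 x := by
    intro x
    have hgd : Differentiable ℝ (fun y => h y - fderiv ℝ h 0 y) :=
      hd.sub (fderiv ℝ h 0).differentiable
    have : ∀ y, fderiv ℝ (fun y => h y - fderiv ℝ h 0 y) y = 0 := by
      intro y
      rw [fderiv_fun_sub (hd y) ((fderiv ℝ h 0).differentiable y)]
      rw [hfconst y, (fderiv ℝ h 0).fderiv]
      simp
    have hc := is_const_of_fderiv_eq_zero (𝕜 := ℝ) hgd this x 0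
    simp only [map_zero, sub_zero] at hc
    linarith [hc]
  -- periodicity kills the linear part
  have hlin : ∀ j, fderiv ℝ h 0 (Pi.single j 1) = 0 := by
    intro j
    have h1 := hper 0 (Pi.single j 1)
    have h2 : ((fun i => ((Pi.single j 1 : Fin m → ℤ) i : ℝ)) : Fin m → ℝ) =
        Pi.single j 1 := by
      funext i
      simp [Pi.single_apply]
    rw [show ((0 : Fin m → ℝ) + fun i => ((Pi.single j 1 : Fin m → ℤ) i : ℝ)) =
        Pi.single j (1:ℝ) by rw [zero_add, h2]] at h1
    have h3 := haffine (Pi.single j 1)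
    rw [h1] at h3
    linarith [h3]
  intro x
  rw [haffine x]
  have : fderiv ℝ h 0 = 0 := by
    apply clm_eq_of_basis
    intro i
    simp [hlin i]
  rw [this]
  simp

end Constant

section Bridge

lemma pd_pd_quad_add {φ : (Fin n → ℝ) → ℝ} (hφ : ContDiff ℝ (⊤ : ℕ∞) φ) (i j : Fin n)
    (x : Fin n → ℝ) :
    pd i (pd j (fun y => quadF n y + φ y)) x
      = (if i = j then (1:ℝ) else 0) + pd i (pd j φ) x := by
  have hdq : Differentiable ℝ (quadF n) := contDiff_quadF.differentiable (by simp)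
  have hdφ : Differentiable ℝ φ := hφ.differentiable (by simp)
  have e1 : pd j (fun y => quadF n y + φ y) = fun y => y j + pd j φ y := by
    funext y
    rw [pd_add j y (hdq y) (hdφ y), pd_quadF]
  rw [e1]
  have hdproj : ∀ y : Fin n → ℝ, DifferentiableAt ℝ (fun z : Fin n → ℝ => z j) y :=
    fun y => (hasFDerivAt_apply j y).differentiableAt
  rw [pd_add i x (hdproj x) (((contDiff_pd hφ j).differentiable (by simp)) x)]
  congr 1
  rw [pd, (hasFDerivAt_apply j x).fderiv]
  simp [Pi.single_apply, eq_comm]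

lemma zper_pd_pd {φ : (Fin n → ℝ) → ℝ} (hφ : ContDiff ℝ (⊤ : ℕ∞) φ) (hper : ZPer φ)
    (i j : Fin n) : ZPer (pd i (pd j φ)) :=
  (hper.pd (hφ.differentiable (by simp)) j).pd
    ((contDiff_pd hφ j).differentiable (by simp)) i

lemma hess_quad_add_apply {φ : (Fin n → ℝ) → ℝ} (hφ : ContDiff ℝ (⊤ : ℕ∞) φ) (i j : Fin n)
    (x : Fin n → ℝ) :
    hess (fun y => quadF n y + φ y) x i j
      = (if i = j then (1:ℝ) else 0) + pd i (pd j φ) x :=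
  pd_pd_quad_add hφ i j x

lemma hess_quad_add_periodic {φ : (Fin n → ℝ) → ℝ} (hφ : ContDiff ℝ (⊤ : ℕ∞) φ)
    (hper : ZPer φ) (x : Fin n → ℝ) (k : Fin n → ℤ) :
    hess (fun y => quadF n y + φ y) (x + fun i => (k i : ℝ))
      = hess (fun y => quadF n y + φ y) x := by
  ext i j
  rw [hess_quad_add_apply hφ, hess_quad_add_apply hφ]
  congr 1
  exact zper_pd_pd hφ hper i j x k

lemma hess_entry_contDiff {u : (Fin n → ℝ) → ℝ} (hu : ContDiff ℝ (⊤ : ℕ∞) u) (i j : Fin n) :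
    ContDiff ℝ (⊤ : ℕ∞) (fun x => hess u x i j) :=
  contDiff_pd (contDiff_pd hu j) i

end Bridge

theorem abreu_core {m : ℕ} (A φ₀ φ₁ : (Fin (m+1) → ℝ) → ℝ)
    (hφ₀ : ContDiff ℝ (⊤ : ℕ∞) φ₀) (hφ₁ : ContDiff ℝ (⊤ : ℕ∞) φ₁)
    (hper₀ : ZPer φ₀) (hper₁ : ZPer φ₁)
    (hpos₀ : ∀ x, (hess (fun y => quadF (m+1) y + φ₀ y) x).PosDef)
    (hpos₁ : ∀ x, (hess (fun y => quadF (m+1) y + φ₁ y) x).PosDef)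
    (heq₀ : ∀ x, abreuOp (fun y => quadF (m+1) y + φ₀ y) x = A x)
    (heq₁ : ∀ x, abreuOp (fun y => quadF (m+1) y + φ₁ y) x = A x) :
    ∀ x, φ₀ x - φ₁ x = φ₀ 0 - φ₁ 0 := by
  classical
  set u : (Fin (m+1) → ℝ) → ℝ := fun y => quadF (m+1) y + φ₀ y with hu_def
  set v : (Fin (m+1) → ℝ) → ℝ := fun y => quadF (m+1) y + φ₁ y with hv_def
  have hu : ContDiff ℝ (⊤ : ℕ∞) u := contDiff_quadF.add hφ₀
  have hv : ContDiff ℝ (⊤ : ℕ∞) v := contDiff_quadF.add hφ₁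
  set h : (Fin (m+1) → ℝ) → ℝ := fun y => φ₀ y - φ₁ y with hh_def
  have hh : ContDiff ℝ (⊤ : ℕ∞) h := hφ₀.sub hφ₁
  have hhd : Differentiable ℝ h := hh.differentiable (by simp)
  have hhper : ZPer h := by
    intro x k
    simp only [hh_def]
    rw [hper₀ x k, hper₁ x k]
  set U : (Fin (m+1) → ℝ) → Matrix (Fin (m+1)) (Fin (m+1)) ℝ := fun x => hess u x with hU_def
  set V : (Fin (m+1) → ℝ) → Matrix (Fin (m+1)) (Fin (m+1)) ℝ := fun x => hess v x with hV_def
  have hUdet : ∀ x, (U x).det ≠ 0 := fun x => (hpos₀ x).det_pos.ne'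
  have hVdet : ∀ x, (V x).det ≠ 0 := fun x => (hpos₁ x).det_pos.ne'
  have hUent : ∀ i j, ContDiff ℝ (⊤ : ℕ∞) (fun x => U x i j) :=
    fun i j => hess_entry_contDiff hu i j
  have hVent : ∀ i j, ContDiff ℝ (⊤ : ℕ∞) (fun x => V x i j) :=
    fun i j => hess_entry_contDiff hv i j
  have hUinv_cd : ∀ i j, ContDiff ℝ (⊤ : ℕ∞) (fun x => (U x)⁻¹ i j) :=
    fun i j => contDiff_inv_entry hUent hUdet i j
  have hVinv_cd : ∀ i j, ContDiff ℝ (⊤ : ℕ∞) (fun x => (V x)⁻¹ i j) :=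
    fun i j => contDiff_inv_entry hVent hVdet i j
  have hUper : ∀ (x : Fin (m+1) → ℝ) (k : Fin (m+1) → ℤ), U (x + fun i => (k i : ℝ)) = U x :=
    fun x k => hess_quad_add_periodic hφ₀ hper₀ x k
  have hVper : ∀ (x : Fin (m+1) → ℝ) (k : Fin (m+1) → ℤ), V (x + fun i => (k i : ℝ)) = V x :=
    fun x k => hess_quad_add_periodic hφ₁ hper₁ x k
  -- the difference of inverse Hessians
  set g : Fin (m+1) → Fin (m+1) → (Fin (m+1) → ℝ) → ℝ :=
    fun i j x => (U x)⁻¹ i j - (V x)⁻¹ i j with hg_def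
  have hg_cd : ∀ i j, ContDiff ℝ (⊤ : ℕ∞) (g i j) :=
    fun i j => (hUinv_cd i j).sub (hVinv_cd i j)
  have hg_per : ∀ i j, ZPer (g i j) := by
    intro i j x k
    simp only [hg_def]
    rw [hUper x k, hVper x k]
  -- W = Hessian of h
  set W : (Fin (m+1) → ℝ) → Matrix (Fin (m+1)) (Fin (m+1)) ℝ := fun x => hess h x with hW_def
  have hWent : ∀ i j x, W x i j = pd i (pd j h) x := fun i j x => rfl
  have hW_cd : ∀ i j, ContDiff ℝ (⊤ : ℕ∞) (fun x => W x i j) :=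
    fun i j => hess_entry_contDiff hh i j
  have hWsym : ∀ x, (W x)ᵀ = W x := by
    intro x
    ext i j
    show pd j (pd i h) x = pd i (pd j h) x
    exact (pd_pd_symm hh i j x).symm
  have hWper : ∀ i j, ZPer (fun x => W x i j) := fun i j => zper_pd_pd hh hhper i j
  have hW_UV : ∀ x, W x = U x - V x := by
    intro x
    ext i j
    show pd i (pd j h) x = U x i j - V x i j
    rw [hU_def, hV_def]
    show _ = hess (fun y => quadF (m+1) y + φ₀ y) x i j - hess (fun y => quadF (m+1) y + φ₁ y) x i j
    rw [hess_quad_add_apply hφ₀, hess_quad_add_apply hφ₁]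
    have e1 : pd j h = fun y => pd j φ₀ y - pd j φ₁ y := by
      funext y
      exact pd_sub j y ((hφ₀.differentiable (by simp)) y)
        ((hφ₁.differentiable (by simp)) y)
    rw [e1, pd_sub i x (((contDiff_pd hφ₀ j).differentiable (by simp)) x)
      (((contDiff_pd hφ₁ j).differentiable (by simp)) x)]
    ring
  -- the difference of the Abreu operators vanishes
  have hUinv_d : ∀ i j, Differentiable ℝ (fun x => (U x)⁻¹ i j) :=
    fun i j => (hUinv_cd i j).differentiable (by simp)
  have hVinv_d : ∀ i j, Differentiable ℝ (fun x => (V x)⁻¹ i j) :=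
    fun i j => (hVinv_cd i j).differentiable (by simp)
  have habreu : ∀ x, ∑ i, ∑ j, pd i (pd j (g i j)) x = 0 := by
    intro x
    have hsplit : ∀ i j : Fin (m+1), pd i (pd j (g i j)) x
        = pd i (pd j (fun z => (U z)⁻¹ i j)) x - pd i (pd j (fun z => (V z)⁻¹ i j)) x := by
      intro i j
      have e1 : pd j (g i j)
          = fun y => pd j (fun z => (U z)⁻¹ i j) y - pd j (fun z => (V z)⁻¹ i j) y := by
        funext y
        exact pd_sub j y (hUinv_d i j y) (hVinv_d i j y)
      rw [e1]
      exact pd_sub i x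
        (((contDiff_pd (hUinv_cd i j) j).differentiable (by simp)) x)
        (((contDiff_pd (hVinv_cd i j) j).differentiable (by simp)) x)
    have hU0 : ∑ i, ∑ j, pd i (pd j (fun z => (U z)⁻¹ i j)) x = A x := heq₀ x
    have hV0 : ∑ i, ∑ j, pd i (pd j (fun z => (V z)⁻¹ i j)) x = A x := heq₁ x
    simp only [hsplit, Finset.sum_sub_distrib]
    rw [hU0, hV0, sub_self]
  -- integration by parts
  set α : Fin (m+1) → Fin (m+1) → (Fin (m+1) → ℝ) → ℝ :=
    fun i j y => pd j (g i j) y * h y with hα_def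
  set β : Fin (m+1) → Fin (m+1) → (Fin (m+1) → ℝ) → ℝ :=
    fun i j y => g i j y * pd i h y with hβ_def
  have hα_cd : ∀ i j, ContDiff ℝ (⊤ : ℕ∞) (α i j) :=
    fun i j => (contDiff_pd (hg_cd i j) j).mul hh
  have hβ_cd : ∀ i j, ContDiff ℝ (⊤ : ℕ∞) (β i j) :=
    fun i j => (hg_cd i j).mul (contDiff_pd hh i)
  have hα_per : ∀ i j, ZPer (α i j) := by
    intro i j x k
    show pd j (g i j) _ * h _ = pd j (g i j) x * h x
    rw [((hg_per i j).pd ((hg_cd i j).differentiable (by simp)) j) x k,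
      hhper x k]
  have hβ_per : ∀ i j, ZPer (β i j) := by
    intro i j x k
    show g i j _ * pd i h _ = g i j x * pd i h x
    rw [(hg_per i j) x k, (hhper.pd hhd i) x k]
  have hibp : ∀ (i j : Fin (m+1)) x, g i j x * pd j (pd i h) x
      = pd i (pd j (g i j)) x * h x - pd i (α i j) x + pd j (β i j) x := by
    intro i j x
    have e2 : pd i (α i j) x = pd i (pd j (g i j)) x * h x + pd j (g i j) x * pd i h x :=
      pd_mul i x (((contDiff_pd (hg_cd i j) j).differentiable (by simp)) x)
        (hhd x)
    have e3 : pd j (β i j) x = pd j (g i j) x * pd i h x + g i j x * pd j (pd i h) x :=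
      pd_mul j x (((hg_cd i j).differentiable (by simp)) x)
        (((contDiff_pd hh i).differentiable (by simp)) x)
    rw [e2, e3]
    ring
  -- the integral identity
  have hcontQ : ∀ (f : (Fin (m+1) → ℝ) → ℝ), Continuous f →
      MeasureTheory.IntegrableOn f (Set.Icc (0 : Fin (m+1) → ℝ) 1) volume :=
    fun f hf => (hf.continuousOn).integrableOn_compact isCompact_Icc
  have hintzero : ∫ x in Set.Icc (0 : Fin (m+1) → ℝ) 1,
      (∑ i, ∑ j, g i j x * pd j (pd i h) x) = 0 := by
    have hptw : ∀ x, (∑ i, ∑ j, g i j x * pd j (pd i h) x)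
        = ∑ i, ∑ j, (pd j (β i j) x - pd i (α i j) x) := by
      intro x
      rw [show (∑ i, ∑ j, g i j x * pd j (pd i h) x)
          = ∑ i, ∑ j, (pd i (pd j (g i j)) x * h x - pd i (α i j) x + pd j (β i j) x) from
        Finset.sum_congr rfl fun i _ => Finset.sum_congr rfl fun j _ => hibp i j x]
      have hz : ∑ i, ∑ j, pd i (pd j (g i j)) x * h x = 0 := by
        have e : (∑ i, ∑ j, pd i (pd j (g i j)) x) * h x
            = ∑ i, ∑ j, pd i (pd j (g i j)) x * h x := by
          rw [Finset.sum_mul]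
          exact Finset.sum_congr rfl fun i _ => Finset.sum_mul _ _ _
        rw [← e, habreu x, zero_mul]
      simp only [Finset.sum_add_distrib, Finset.sum_sub_distrib]
      rw [hz]
      ring
    simp only [hptw]
    rw [MeasureTheory.integral_finset_sum _ (fun i _ => ?_)]
    · apply Finset.sum_eq_zero
      intro i _
      rw [MeasureTheory.integral_finset_sum _ (fun j _ => ?_)]
      · apply Finset.sum_eq_zero
        intro j _
        rw [MeasureTheory.integral_sub (hcontQ _ (contDiff_pd (hβ_cd i j) j).continuous)
          (hcontQ _ (contDiff_pd (hα_cd i j) i).continuous)]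
        rw [integral_pd_periodic (β i j) (hβ_cd i j) (hβ_per i j) j,
          integral_pd_periodic (α i j) (hα_cd i j) (hα_per i j) i, sub_self]
      · exact (hcontQ _ (((contDiff_pd (hβ_cd i j) j).continuous).sub
          (contDiff_pd (hα_cd i j) i).continuous))
    · apply MeasureTheory.integrable_finset_sum
      intro j _
      exact (hcontQ _ (((contDiff_pd (hβ_cd i j) j).continuous).sub
        (contDiff_pd (hα_cd i j) i).continuous))
  -- pointwise trace identity
  have htrace : ∀ x, (∑ i, ∑ j, g i j x * pd j (pd i h) x)
      = -(((U x)⁻¹ * W x * ((V x)⁻¹ * W x)).trace) := by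
    intro x
    have hG : (U x)⁻¹ - (V x)⁻¹ = -((U x)⁻¹ * (W x * (V x)⁻¹)) := by
      have h1 : (U x)⁻¹ * ((U x - V x) * (V x)⁻¹) = (V x)⁻¹ - (U x)⁻¹ := by
        rw [Matrix.sub_mul, Matrix.mul_sub, ← Matrix.mul_assoc,
          Matrix.nonsing_inv_mul (U x) (isUnit_iff_ne_zero.2 (hUdet x)), Matrix.one_mul,
          ← Matrix.mul_assoc]
        rw [Matrix.mul_assoc ((U x)⁻¹) (V x) ((V x)⁻¹),
          Matrix.mul_nonsing_inv (V x) (isUnit_iff_ne_zero.2 (hVdet x)), Matrix.mul_one]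
      rw [hW_UV x, h1]
      rw [neg_sub]
    have step1 : (∑ i, ∑ j, g i j x * pd j (pd i h) x)
        = (((U x)⁻¹ - (V x)⁻¹) * W x).trace := by
      rw [Matrix.trace]
      apply Finset.sum_congr rfl
      intro i _
      rw [Matrix.diag_apply, Matrix.mul_apply]
      apply Finset.sum_congr rfl
      intro j _
      rw [Matrix.sub_apply]
      rfl
    rw [step1, hG]
    rw [Matrix.neg_mul, Matrix.trace_neg]
    simp only [Matrix.mul_assoc]
  -- conclude W = 0 on the unit cube
  set T : (Fin (m+1) → ℝ) → ℝ := fun x => (((U x)⁻¹ * W x * ((V x)⁻¹ * W x)).trace) with hT_def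
  have hkey : ∀ x, 0 ≤ T x ∧ (T x = 0 → W x = 0) := by
    intro x
    have := trace_PWQW_nonneg (hpos₀ x).inv (hpos₁ x).inv (hWsym x)
    constructor
    · have h0 := this.1
      rw [Matrix.mul_assoc ((U x)⁻¹ * W x) ((V x)⁻¹) (W x)] at h0
      exact h0
    · intro hT0
      apply this.2
      rw [Matrix.mul_assoc ((U x)⁻¹ * W x) ((V x)⁻¹) (W x)]
      exact hT0
  have hTeq : T = fun x => -(∑ i, ∑ j, g i j x * pd j (pd i h) x) := by
    funext x
    rw [htrace x, neg_neg]
  have hTcont : Continuous T := by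
    rw [hTeq]
    apply Continuous.neg
    apply continuous_finset_sum
    intro i _
    apply continuous_finset_sum
    intro j _
    exact ((hg_cd i j).continuous).mul (contDiff_pd (contDiff_pd hh i) j).continuous
  have hTint : ∫ x in Set.Icc (0 : Fin (m+1) → ℝ) 1, T x = 0 := by
    rw [hTeq]
    rw [MeasureTheory.integral_neg]
    rw [hintzero, neg_zero]
  have hWzeroQ : ∀ x ∈ Set.Icc (0 : Fin (m+1) → ℝ) 1, W x = 0 := by
    intro x hx
    exact (hkey x).2 (eq_zero_of_integral_zero T hTcont (fun y => (hkey y).1) hTint x hx)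
  -- extend to all of space by periodicity
  have hWzero : ∀ x, W x = 0 := by
    intro x
    set k : Fin (m+1) → ℤ := fun i => -⌊x i⌋ with hk_def
    set y : Fin (m+1) → ℝ := x + fun i => (k i : ℝ) with hy_def
    have hy : y ∈ Set.Icc (0 : Fin (m+1) → ℝ) 1 := by
      constructor
      · intro i
        show (0:ℝ) ≤ x i + ((-⌊x i⌋ : ℤ) : ℝ)
        push_cast
        have := Int.fract_nonneg (x i)
        rw [Int.fract] at this
        linarith
      · intro i
        show x i + ((-⌊x i⌋ : ℤ) : ℝ) ≤ 1
        push_cast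
        have := Int.fract_lt_one (x i)
        rw [Int.fract] at this
        linarith
    ext i j
    have hper : W (x + fun i => (k i : ℝ)) i j = W x i j := hWper i j x k
    show W x i j = (0 : Matrix (Fin (m+1)) (Fin (m+1)) ℝ) i j
    have h2 : W x i j = W y i j := hper.symm
    rw [h2, hWzeroQ y hy]
  -- the Hessian of h vanishes, so h is constant
  have hpdzero : ∀ (x : Fin (m+1) → ℝ) (i j : Fin (m+1)), pd i (pd j h) x = 0 := by
    intro x i j
    have := congrFun (congrFun (congrArg (fun M => (M : Matrix (Fin (m+1)) (Fin (m+1)) ℝ))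
      (hWzero x)) i) j
    simpa [hWent] using this
  have hfinal := const_of_pd_pd_zero h hh hhper (fun x i j => hpdzero x i j)
  intro x
  exact hfinal x

theorem abreu_periodic_uniqueness {n : ℕ} (A φ₀ φ₁ : (Fin n → ℝ) → ℝ)
    (hφ₀ : ContDiff ℝ (⊤ : ℕ∞) φ₀) (hφ₁ : ContDiff ℝ (⊤ : ℕ∞) φ₁)
    (hper₀ : ZPer φ₀) (hper₁ : ZPer φ₁)
    (hconv₀ : ConvexOn ℝ Set.univ (fun x => (1 / 2 : ℝ) * ∑ i, x i ^ 2 + φ₀ x))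
    (hconv₁ : ConvexOn ℝ Set.univ (fun x => (1 / 2 : ℝ) * ∑ i, x i ^ 2 + φ₁ x))
    (hpos₀ : ∀ x, (hess (fun y => (1 / 2 : ℝ) * ∑ i, y i ^ 2 + φ₀ y) x).PosDef)
    (hpos₁ : ∀ x, (hess (fun y => (1 / 2 : ℝ) * ∑ i, y i ^ 2 + φ₁ y) x).PosDef)
    (heq₀ : ∀ x, abreuOp (fun y => (1 / 2 : ℝ) * ∑ i, y i ^ 2 + φ₀ y) x = A x)
    (heq₁ : ∀ x, abreuOp (fun y => (1 / 2 : ℝ) * ∑ i, y i ^ 2 + φ₁ y) x = A x) :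
    ∃ c : ℝ, ∀ x, φ₀ x - φ₁ x = c := by
  cases n with
  | zero =>
    refine ⟨φ₀ 0 - φ₁ 0, fun x => ?_⟩
    have hx : x = 0 := by
      funext i
      exact Fin.elim0 i
    rw [hx]
  | succ m =>
    refine ⟨φ₀ 0 - φ₁ 0, fun x => ?_⟩
    exact abreu_core A φ₀ φ₁ hφ₀ hφ₁ hper₀ hper₁ hpos₀ hpos₁ heq₀ heq₁ x
end

section
/- Let φ : ℝⁿ → ℝ be a smooth ℤⁿ-periodic function with φ(0) = 0 such that x ↦ ½|x|² + φ(x) is convex. Then there is a constant C depending only on n such that |φ(x)| < C and |∇φ(x)| < C for all x ∈ ℝⁿ. -/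
open MeasureTheory Matrix

theorem key_bound (n : ℕ) (φ : (Fin n → ℝ) → ℝ) (hφ : ContDiff ℝ (⊤ : ℕ∞) φ)
    (hper : ZPer φ)
    (hconv : ConvexOn ℝ Set.univ (fun x => (1 / 2 : ℝ) * ∑ i, x i ^ 2 + φ x))
    (x : Fin n → ℝ) (i : Fin n) : |pd i φ x| ≤ 1 / 2 := by
  have hd : Differentiable ℝ φ := hφ.differentiable (by simp)
  set e : Fin n → ℝ := Pi.single i 1 with he
  set g : ℝ → ℝ := fun t => (1 / 2 : ℝ) * ∑ j, (x j + t * e j) ^ 2 + φ (x + t • e) with hg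
  -- convexity of g
  have hline : ∀ t : ℝ, (AffineMap.lineMap x (x + e) : ℝ →ᵃ[ℝ] (Fin n → ℝ)) t = x + t • e := by
    intro t
    simp [AffineMap.lineMap_apply]
    abel
  have hgc : ConvexOn ℝ Set.univ g := by
    have h := hconv.comp_affineMap (AffineMap.lineMap x (x + e))
    simp only [Set.preimage_univ] at h
    have heq : ((fun y => (1 / 2 : ℝ) * ∑ i, y i ^ 2 + φ y) ∘ (AffineMap.lineMap x (x + e))) = g := by
      funext t
      simp only [Function.comp_apply, hline t, hg]
      have : ∀ j, (x + t • e) j ^ 2 = (x j + t * e j) ^ 2 := fun j => by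
        simp [mul_comm]
      simp_rw [this]
    rw [← heq]
    exact h
  -- derivative of g
  have hder : ∀ t : ℝ, HasDerivAt g ((∑ j, (x j + t * e j) * e j) + fderiv ℝ φ (x + t • e) e) t := by
    intro t
    have hc : HasDerivAt (fun s : ℝ => x + s • e) e t := by
      simpa using ((hasDerivAt_id t).smul_const e).const_add x
    have h2 : HasDerivAt (fun s => φ (x + s • e)) (fderiv ℝ φ (x + t • e) e) t :=
      (hd (x + t • e)).hasFDerivAt.comp_hasDerivAt t hc
    have h1 : HasDerivAt (fun s : ℝ => (1 / 2 : ℝ) * ∑ j, (x j + s * e j) ^ 2)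
        ((1/2 : ℝ) * ∑ j, 2 * (x j + t * e j) * e j) t := by
      refine HasDerivAt.const_mul _ (HasDerivAt.fun_sum fun j _ => ?_)
      have hj : HasDerivAt (fun s : ℝ => x j + s * e j) (e j) t := by
        simpa using ((hasDerivAt_id t).mul_const (e j)).const_add (x j)
      have := hj.fun_pow 2
      simpa [mul_comm, mul_assoc, mul_left_comm] using this
    have := h1.add h2
    convert this using 1
    case e'_4 => rfl
    case e'_5 => rfl
    case e'_8 => rfl
    rw [Finset.mul_sum, Finset.sum_congr rfl]
    intro j _
    ring
  have hderiv0 : deriv g 0 = x i + pd i φ x := by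
    have := (hder 0).deriv
    rw [this]
    simp [pd, he, Pi.single_apply, Finset.sum_ite_eq', mul_ite]
  -- periodicity values
  have hval : ∀ m : ℤ, φ (x + (m : ℝ) • e) = φ x := by
    intro m
    have := hper x (fun j => if j = i then m else 0)
    rw [← this]
    congr 1
    funext j
    by_cases h : j = i <;> simp [h, he, Pi.single_apply]
  have hsum : ∀ t : ℝ, ∑ j, (x j + t * e j) ^ 2 = (∑ j, x j ^ 2) + 2 * t * x i + t ^ 2 := by
    intro t
    have : ∀ j, (x j + t * e j) ^ 2 = x j ^ 2 + 2 * t * (x j * e j) + t ^ 2 * e j ^ 2 := by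
      intro j; ring
    simp_rw [this, Finset.sum_add_distrib, ← Finset.mul_sum]
    simp [he, Pi.single_apply, mul_ite, Finset.sum_ite_eq']
    try ring
  have hg1 : g 1 = g 0 + x i + 1/2 := by
    have h1 := hval 1
    push_cast at h1
    simp only [hg, one_smul, zero_smul, add_zero] at *
    rw [hsum 1, hsum 0, h1]
    ring
  have hgm1 : g (-1) = g 0 - x i + 1/2 := by
    have h1 := hval (-1)
    push_cast at h1
    simp only [hg, neg_smul, one_smul, zero_smul, add_zero] at *
    rw [hsum (-1), hsum 0, h1]
    ring
  have hdiff : ∀ t : ℝ, DifferentiableAt ℝ g t := fun t => (hder t).differentiableAt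
  have hub : deriv g 0 ≤ slope g 0 1 :=
    hgc.deriv_le_slope (Set.mem_univ 0) (Set.mem_univ 1) one_pos (hdiff 0)
  have hlb : slope g (-1) 0 ≤ deriv g 0 :=
    hgc.slope_le_deriv (Set.mem_univ (-1)) (Set.mem_univ 0) (by norm_num) (hdiff 0)
  rw [slope_def_field] at hub hlb
  rw [hderiv0] at hub hlb
  rw [hg1] at hub
  rw [hgm1] at hlb
  norm_num at hub hlb
  rw [abs_le]
  constructor
  · linarith
  · linarith

theorem opnorm_bound (n : ℕ) (φ : (Fin n → ℝ) → ℝ) (hd : Differentiable ℝ φ)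
    (hb : ∀ (z : Fin n → ℝ) (i : Fin n), |pd i φ z| ≤ 1 / 2) (z : Fin n → ℝ) :
    ‖fderiv ℝ φ z‖ ≤ n / 2 := by
  refine ContinuousLinearMap.opNorm_le_bound _ (by positivity) fun v => ?_
  have hv : ∑ j, v j • (Pi.single j (1:ℝ) : Fin n → ℝ) = v := by
    funext j
    simp [Pi.single_apply, Finset.sum_ite_eq']
  calc ‖fderiv ℝ φ z v‖ = ‖∑ j, v j * fderiv ℝ φ z (Pi.single j 1)‖ := by
        conv_lhs => rw [← hv]
        rw [map_sum]
        simp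
    _ ≤ ∑ j, ‖v j * fderiv ℝ φ z (Pi.single j 1)‖ := norm_sum_le _ _
    _ ≤ ∑ j : Fin n, ‖v‖ * (1/2) := by
        refine Finset.sum_le_sum fun j _ => ?_
        rw [norm_mul]
        gcongr
        · exact norm_le_pi_norm v j
        · exact hb z j
    _ = n / 2 * ‖v‖ := by
        simp [Finset.sum_const]
        try ring

theorem C0_C1_bound (n : ℕ) :
    ∃ C : ℝ, ∀ φ : (Fin n → ℝ) → ℝ, ContDiff ℝ (⊤ : ℕ∞) φ → ZPer φ → φ 0 = 0 →
      ConvexOn ℝ Set.univ (fun x => (1 / 2 : ℝ) * ∑ i, x i ^ 2 + φ x) →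
      ∀ x, |φ x| < C ∧ Real.sqrt (∑ i, (pd i φ x) ^ 2) < C := by
  refine ⟨n / 2 + 1, fun φ hφ hper h0 hconv x => ?_⟩
  have hd : Differentiable ℝ φ := hφ.differentiable (by simp)
  have hb : ∀ (z : Fin n → ℝ) (i : Fin n), |pd i φ z| ≤ 1 / 2 :=
    fun z i => key_bound n φ hφ hper hconv z i
  constructor
  · -- C0 bound
    set y : Fin n → ℝ := fun j => x j - (⌊x j⌋ : ℝ) with hy
    have hxy : φ y = φ x := by
      have := hper x (fun j => -⌊x j⌋)
      rw [← this]
      congr 1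
      funext j
      simp only [hy, Pi.add_apply]
      push_cast
      ring
    have hyn : ‖y‖ ≤ 1 := by
      refine (pi_norm_le_iff_of_nonneg zero_le_one).2 fun j => ?_
      rw [Real.norm_eq_abs]
      have h1 : (0:ℝ) ≤ x j - ⌊x j⌋ := by
        have := Int.floor_le (x j); linarith
      have h2 : x j - (⌊x j⌋:ℝ) < 1 := by
        have := Int.lt_floor_add_one (x j); linarith
      rw [abs_of_nonneg h1]; linarith
    have hmvt : ‖φ y - φ 0‖ ≤ (n / 2) * ‖y - 0‖ :=
      (convex_univ (𝕜 := ℝ)).norm_image_sub_le_of_norm_fderiv_le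
        (fun z _ => hd z) (fun z _ => opnorm_bound n φ hd hb z)
        (Set.mem_univ 0) (Set.mem_univ y)
    rw [h0, sub_zero, sub_zero, hxy, Real.norm_eq_abs] at hmvt
    have : (n / 2 : ℝ) * ‖y‖ ≤ n / 2 := by
      have hn : (0:ℝ) ≤ n / 2 := by positivity
      nlinarith [norm_nonneg y]
    linarith
  · -- C1 bound
    have hsum : ∑ i, (pd i φ x) ^ 2 ≤ ∑ _i : Fin n, (1/2:ℝ)^2 := by
      refine Finset.sum_le_sum fun i _ => ?_
      have := hb x i
      nlinarith [abs_nonneg (pd i φ x), sq_abs (pd i φ x)]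
    have h2 : ∑ _i : Fin n, (1/2:ℝ)^2 = n / 4 := by
      simp [Finset.sum_const]
      try ring
    rw [h2] at hsum
    have hlt : (n / 4 : ℝ) < (n / 2 + 1)^2 := by nlinarith [sq_nonneg (n:ℝ)]
    calc Real.sqrt (∑ i, (pd i φ x) ^ 2) ≤ Real.sqrt (n/4) := Real.sqrt_le_sqrt hsum
      _ < n / 2 + 1 := by
          rw [show (n/2+1 : ℝ) = Real.sqrt ((n/2+1)^2) by
            rw [Real.sqrt_sq (by positivity)]]
          exact Real.sqrt_lt_sqrt (by positivity) hlt
end
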